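/- Let {A_i}_{i=1}^m be events with P(A_i) > 0 in a probability space. Then P(⋃_{i=1}^m A_i) ≥ sup over (ω_1,…,ω_m) ∈ ℝ^m of (∑_{i=1}^m ω_i P(A_i))² / (∑_{i=1}^m ∑_{j=1}^m ω_i ω_j P(A_i ∩ A_j)), with the convention 0/0 = 0. -/

import Mathlib

open MeasureTheory Filter Set ProbabilityTheory

lemma gk_cauchy_schwarz {Ω : Type*} [MeasurableSpace Ω] (μ : Measure Ω)
    [IsProbabilityMeasure μ] {U : Set Ω} (hU : MeasurableSet U) (hU0 : μ U ≠ 0)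
    {X : Ω → ℝ} (hX : MemLp X 2 μ) (hsupp : ∀ x ∉ U, X x = 0) :
    (∫ x, X x ∂μ) ^ 2 ≤ (μ U).toReal * ∫ x, (X x) ^ 2 ∂μ := by
  set ν := μ[|U] with hν
  haveI : IsProbabilityMeasure ν := ProbabilityTheory.cond_isProbabilityMeasure hU0
  have hXν : MemLp X 2 ν := by
    rw [hν, ProbabilityTheory.cond]
    exact (hX.restrict U).smul_measure (ENNReal.inv_ne_top.2 hU0)
  have hvar := ProbabilityTheory.variance_nonneg X ν
  rw [ProbabilityTheory.variance_eq_sub hXν] at hvar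
  have hkey : (∫ x, X x ∂ν) ^ 2 ≤ ∫ x, (X x) ^ 2 ∂ν := by
    have : (∫ x, X x ∂ν) ^ 2 ≤ ∫ x, (X ^ 2) x ∂ν := by linarith
    simpa using this
  have hp : 0 < (μ U).toReal :=
    ENNReal.toReal_pos hU0 (measure_ne_top μ U)
  have h1 : ∫ x, X x ∂ν = (μ U).toReal⁻¹ * ∫ x, X x ∂μ := by
    rw [hν, ProbabilityTheory.cond, integral_smul_measure,
      setIntegral_eq_integral_of_forall_compl_eq_zero hsupp, ENNReal.toReal_inv,
      smul_eq_mul]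
  have h2 : ∫ x, (X x) ^ 2 ∂ν ≤ (μ U).toReal⁻¹ * ∫ x, (X x) ^ 2 ∂μ := by
    rw [hν, ProbabilityTheory.cond, integral_smul_measure, ENNReal.toReal_inv, smul_eq_mul]
    exact mul_le_mul_of_nonneg_left
      (setIntegral_le_integral hX.integrable_sq (Eventually.of_forall fun x => sq_nonneg _))
      (inv_nonneg.2 hp.le)
  rw [h1] at hkey
  have hfin := hkey.trans h2
  have hpne : (μ U).toReal ≠ 0 := hp.ne'
  calc (∫ x, X x ∂μ) ^ 2
      = (μ U).toReal ^ 2 * (((μ U).toReal⁻¹ * ∫ x, X x ∂μ) ^ 2) := by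
        field_simp
    _ ≤ (μ U).toReal ^ 2 * ((μ U).toReal⁻¹ * ∫ x, (X x) ^ 2 ∂μ) := by
        exact mul_le_mul_of_nonneg_left hfin (sq_nonneg _)
    _ = (μ U).toReal * ∫ x, (X x) ^ 2 ∂μ := by
        field_simp

theorem gallot_kounias_bound {Ω : Type*} [MeasurableSpace Ω] (μ : Measure Ω)
    [IsProbabilityMeasure μ] (m : ℕ) (A : Fin m → Set Ω)
    (hA : ∀ i, MeasurableSet (A i)) (hpos : ∀ i, 0 < μ (A i)) :
    (μ (⋃ i, A i)).toReal ≥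
      sSup {x : ℝ | ∃ ω : Fin m → ℝ,
        x = (∑ i, ω i * (μ (A i)).toReal) ^ 2 /
          (∑ i, ∑ j, ω i * ω j * (μ (A i ∩ A j)).toReal)} := by
  set U := ⋃ i, A i with hUdef
  have hU : MeasurableSet U := MeasurableSet.iUnion hA
  have hp0 : (0:ℝ) ≤ (μ U).toReal := ENNReal.toReal_nonneg
  refine Real.sSup_le ?_ hp0
  rintro x ⟨ω, rfl⟩
  rcases Nat.eq_zero_or_pos m with hm | hm
  · subst hm
    simp [hp0]
  have hU0 : μ U ≠ 0 := by
    have : μ (A ⟨0, hm⟩) ≤ μ U := measure_mono (subset_iUnion A _)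
    exact fun h => absurd ((hpos ⟨0, hm⟩).trans_le this) (by simp [h])
  set X : Ω → ℝ := fun x => ∑ i, (A i).indicator (fun _ => ω i) x with hXdef
  have hXmem : MemLp X 2 μ := by
    have hXe : X = ∑ i, (A i).indicator (fun _ => ω i) := by
      ext x; simp [hXdef]
    rw [hXe]
    exact memLp_finset_sum' _ fun i _ =>
      memLp_indicator_const 2 (hA i) (ω i) (Or.inr (measure_ne_top μ _))
  have hsupp : ∀ x ∉ U, X x = 0 := by
    intro x hx
    rw [hXdef]
    apply Finset.sum_eq_zero
    intro i _
    exact Set.indicator_of_notMem (fun h => hx (mem_iUnion.2 ⟨i, h⟩)) _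
  have hI1 : ∫ x, X x ∂μ = ∑ i, ω i * (μ (A i)).toReal := by
    rw [hXdef, integral_finset_sum _ fun i _ =>
      (integrable_const (ω i)).indicator (hA i)]
    refine Finset.sum_congr rfl fun i _ => ?_
    rw [integral_indicator_const _ (hA i), smul_eq_mul, mul_comm, measureReal_def]
  have hI2 : ∫ x, (X x) ^ 2 ∂μ = ∑ i, ∑ j, ω i * ω j * (μ (A i ∩ A j)).toReal := by
    have hXsq : ∀ x, (X x) ^ 2 =
        ∑ i, ∑ j, (A i ∩ A j).indicator (fun _ => ω i * ω j) x := by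
      intro x
      rw [hXdef, sq, Finset.sum_mul_sum]
      refine Finset.sum_congr rfl fun i _ => Finset.sum_congr rfl fun j _ => ?_
      rw [← Set.inter_indicator_mul]
    simp_rw [hXsq]
    rw [integral_finset_sum _ fun i _ => integrable_finset_sum _ fun j _ =>
      (integrable_const (ω i * ω j)).indicator ((hA i).inter (hA j))]
    refine Finset.sum_congr rfl fun i _ => ?_
    rw [integral_finset_sum _ fun j _ =>
      (integrable_const (ω i * ω j)).indicator ((hA i).inter (hA j))]
    refine Finset.sum_congr rfl fun j _ => ?_
    rw [integral_indicator_const _ ((hA i).inter (hA j)), smul_eq_mul, mul_comm, measureReal_def]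
  have hcs := gk_cauchy_schwarz μ hU hU0 hXmem hsupp
  rw [hI1, hI2] at hcs
  set num := ∑ i, ω i * (μ (A i)).toReal
  set den := ∑ i, ∑ j, ω i * ω j * (μ (A i ∩ A j)).toReal
  have hden : 0 ≤ den := by
    rw [← hI2]
    exact integral_nonneg fun x => sq_nonneg _
  rcases hden.eq_or_lt with h | h
  · have hnum : num ^ 2 = 0 := le_antisymm (by rw [← h] at hcs; linarith) (sq_nonneg _)
    rw [← h, div_zero]
    exact hp0
  · rw [div_le_iff₀ h]
    linarith
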